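/- arXiv:1606.01977 — 5 statements merged into one kernel-verified Lean document; each statement's English description precedes it below -/
import Mathlib

section
/- Let k be a field and let k[x,y,z] be the polynomial ring in three variables over k. Then the intersection of ideals (x, y²) ∩ (x², z) ∩ (y, z²) equals the ideal (x·y·z, x²·y, y²·z, z²·x). -/
open MvPolynomial

/-- In `k[x,y,z]`, `(x, y²) ∩ (x², z) ∩ (y, z²) = (xyz, x²y, y²z, z²x)`. -/
theorem stmt_4 (k : Type*) [Field k] :
    (Ideal.span {(X 0 : MvPolynomial (Fin 3) k), X 1 ^ 2} ⊓
        Ideal.span {(X 0 : MvPolynomial (Fin 3) k) ^ 2, X 2} ⊓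
        Ideal.span {(X 1 : MvPolynomial (Fin 3) k), X 2 ^ 2}) =
      Ideal.span {(X 0 : MvPolynomial (Fin 3) k) * X 1 * X 2, X 0 ^ 2 * X 1,
        X 1 ^ 2 * X 2, X 2 ^ 2 * X 0} := by
  have hX : ∀ i : Fin 3, (X i : MvPolynomial (Fin 3) k) = monomial (Finsupp.single i 1) 1 := by
    intro i; rw [← X_pow_eq_monomial, pow_one]
  have hXX : ∀ (i j : Fin 3) (e f : ℕ), (X i ^ e : MvPolynomial (Fin 3) k) * X j ^ f
      = monomial (Finsupp.single i e + Finsupp.single j f) 1 := by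
    intro i j e f; rw [monomial_add_single, X_pow_eq_monomial]
  have hXXX : (X 0 : MvPolynomial (Fin 3) k) * X 1 * X 2
      = monomial (Finsupp.single 0 1 + Finsupp.single 1 1 + Finsupp.single 2 1) 1 := by
    rw [monomial_add_single, monomial_add_single, pow_one, pow_one, ← X_pow_eq_monomial, pow_one]
  have e1 : Ideal.span {(X 0 : MvPolynomial (Fin 3) k), X 1 ^ 2}
      = Ideal.span ((fun s => monomial s (1:k)) '' {Finsupp.single 0 1, Finsupp.single 1 2}) := by
    rw [Set.image_insert_eq, Set.image_singleton, X_pow_eq_monomial, hX]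
  have e2 : Ideal.span {(X 0 : MvPolynomial (Fin 3) k) ^ 2, X 2}
      = Ideal.span ((fun s => monomial s (1:k)) '' {Finsupp.single 0 2, Finsupp.single 2 1}) := by
    rw [Set.image_insert_eq, Set.image_singleton, X_pow_eq_monomial, hX]
  have e3 : Ideal.span {(X 1 : MvPolynomial (Fin 3) k), X 2 ^ 2}
      = Ideal.span ((fun s => monomial s (1:k)) '' {Finsupp.single 1 1, Finsupp.single 2 2}) := by
    rw [Set.image_insert_eq, Set.image_singleton, X_pow_eq_monomial, hX]
  have e4 : Ideal.span {(X 0 : MvPolynomial (Fin 3) k) * X 1 * X 2, X 0 ^ 2 * X 1,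
        X 1 ^ 2 * X 2, X 2 ^ 2 * X 0}
      = Ideal.span ((fun s => monomial s (1:k)) ''
        {Finsupp.single 0 1 + Finsupp.single 1 1 + Finsupp.single 2 1, Finsupp.single 0 2 + Finsupp.single 1 1,
         Finsupp.single 1 2 + Finsupp.single 2 1, Finsupp.single 2 2 + Finsupp.single 0 1}) := by
    rw [Set.image_insert_eq, Set.image_insert_eq, Set.image_insert_eq, Set.image_singleton,
      hXXX]
    rw [show ((X 0:MvPolynomial (Fin 3) k) ^ 2 * X 1) = X 0 ^ 2 * X 1 ^ 1 by ring,
      show ((X 1:MvPolynomial (Fin 3) k) ^ 2 * X 2) = X 1 ^ 2 * X 2 ^ 1 by ring,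
      show ((X 2:MvPolynomial (Fin 3) k) ^ 2 * X 0) = X 2 ^ 2 * X 0 ^ 1 by ring,
      hXX, hXX, hXX]
  rw [e1, e2, e3, e4]
  ext f
  simp only [Ideal.mem_inf, mem_ideal_span_monomial_image, Set.mem_insert_iff,
    Set.mem_singleton_iff, exists_eq_or_imp, exists_eq_left]
  have hle : ∀ (s m : Fin 3 →₀ ℕ), s ≤ m ↔ s 0 ≤ m 0 ∧ s 1 ≤ m 1 ∧ s 2 ≤ m 2 := by
    intro s m
    rw [Finsupp.le_def]
    constructor
    · intro h; exact ⟨h 0, h 1, h 2⟩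
    · rintro ⟨a, b, c⟩ i; fin_cases i <;> assumption
  constructor
  · rintro ⟨⟨h1, h2⟩, h3⟩ m hm
    obtain h1 := h1 m hm; obtain h2 := h2 m hm; obtain h3 := h3 m hm
    simp only [hle, Finsupp.add_apply, Finsupp.single_apply] at h1 h2 h3 ⊢
    simp +decide at h1 h2 h3 ⊢
    omega
  · intro h
    refine ⟨⟨fun m hm => ?_, fun m hm => ?_⟩, fun m hm => ?_⟩ <;>
    · obtain h := h m hm
      simp only [hle, Finsupp.add_apply, Finsupp.single_apply] at h ⊢
      simp +decide at h ⊢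
      omega
end

section
/- Let k be a field and S = k[x,y,z] the polynomial ring in three variables. Consider the S-module homomorphism φ : S⁴ → S sending (f₁,f₂,f₃,f₄) to f₁·xyz + f₂·x²y + f₃·y²z + f₄·z²x. Then the kernel of φ is the S-submodule of S⁴ generated by the three vectors (x, −z, 0, 0), (y, 0, −x, 0), and (z, 0, 0, −y). -/
open MvPolynomial

lemma prime_X_fin3 {k : Type*} [Field k] (i : Fin 3) :
    Prime (X i : MvPolynomial (Fin 3) k) := by
  have h0 : Prime (X 0 : MvPolynomial (Fin 3) k) := by
    rw [← MulEquiv.prime_iff (MvPolynomial.finSuccEquiv k 2).toMulEquiv]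
    simpa [MvPolynomial.finSuccEquiv_X_zero] using
      Polynomial.prime_X (R := MvPolynomial (Fin 2) k)
  have := (MulEquiv.prime_iff (renameEquiv k (Equiv.swap (0 : Fin 3) i)).toMulEquiv).mpr h0
  simpa using this

/-- Let `S = k[x,y,z]` and let `φ : S⁴ → S` be the `S`-linear map sending `(f₁,f₂,f₃,f₄)` to
`f₁·xyz + f₂·x²y + f₃·y²z + f₄·z²x`. Then `ker φ` is the `S`-submodule of `S⁴` generated by
`(x, −z, 0, 0)`, `(y, 0, −x, 0)` and `(z, 0, 0, −y)`. -/
theorem stmt_5 (k : Type*) [Field k]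
    (φ : (Fin 4 → MvPolynomial (Fin 3) k) →ₗ[MvPolynomial (Fin 3) k] MvPolynomial (Fin 3) k)
    (hφ : ∀ v : Fin 4 → MvPolynomial (Fin 3) k,
      φ v = v 0 * (X 0 * X 1 * X 2) + v 1 * (X 0 ^ 2 * X 1) +
        v 2 * (X 1 ^ 2 * X 2) + v 3 * (X 2 ^ 2 * X 0)) :
    LinearMap.ker φ =
      Submodule.span (MvPolynomial (Fin 3) k)
        {![X 0, -X 2, 0, 0], ![X 1, 0, -X 0, 0], ![X 2, 0, 0, -X 1]} := by
  set S := MvPolynomial (Fin 3) k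
  apply le_antisymm
  · -- ker ⊆ span
    intro v hv
    rw [LinearMap.mem_ker, hφ] at hv
    -- X 2 ∣ v 1
    obtain ⟨c1, hc1⟩ : (X 2 : S) ∣ v 1 := by
      have hd : (X 2 : S) ∣ v 1 * (X 0 ^ 2 * X 1) :=
        ⟨-(v 0 * (X 0 * X 1) + v 2 * X 1 ^ 2 + v 3 * (X 2 * X 0)), by linear_combination hv⟩
      rcases (prime_X_fin3 2).2.2 _ _ hd with h | h
      · exact h
      · rcases (prime_X_fin3 2).2.2 _ _ h with h' | h'
        · rcases (prime_X_fin3 2).2.2 _ _ (by simpa [sq] using h') with h'' | h'' <;>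
            simp [X_dvd_X] at h''
        · simp [X_dvd_X] at h'
    obtain ⟨c2, hc2⟩ : (X 0 : S) ∣ v 2 := by
      have hd : (X 0 : S) ∣ v 2 * (X 1 ^ 2 * X 2) :=
        ⟨-(v 0 * (X 1 * X 2) + v 1 * (X 0 * X 1) + v 3 * X 2 ^ 2), by linear_combination hv⟩
      rcases (prime_X_fin3 0).2.2 _ _ hd with h | h
      · exact h
      · rcases (prime_X_fin3 0).2.2 _ _ h with h' | h'
        · rcases (prime_X_fin3 0).2.2 _ _ (by simpa [sq] using h') with h'' | h'' <;>
            simp [X_dvd_X] at h''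
        · simp [X_dvd_X] at h'
    obtain ⟨c3, hc3⟩ : (X 1 : S) ∣ v 3 := by
      have hd : (X 1 : S) ∣ v 3 * (X 2 ^ 2 * X 0) :=
        ⟨-(v 0 * (X 0 * X 2) + v 1 * X 0 ^ 2 + v 2 * (X 1 * X 2)), by linear_combination hv⟩
      rcases (prime_X_fin3 1).2.2 _ _ hd with h | h
      · exact h
      · rcases (prime_X_fin3 1).2.2 _ _ h with h' | h'
        · rcases (prime_X_fin3 1).2.2 _ _ (by simpa [sq] using h') with h'' | h'' <;>
            simp [X_dvd_X] at h''
        · simp [X_dvd_X] at h'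
    have hxyz : (X 0 * X 1 * X 2 : S) ≠ 0 :=
      mul_ne_zero (mul_ne_zero (X_ne_zero 0) (X_ne_zero 1)) (X_ne_zero 2)
    have hv0 : v 0 = -(c1 * X 0 + c2 * X 1 + c3 * X 2) := by
      have key : (X 0 * X 1 * X 2 : S) * (v 0 + c1 * X 0 + c2 * X 1 + c3 * X 2) = 0 := by
        rw [hc1, hc2, hc3] at hv
        linear_combination hv
      rcases mul_eq_zero.mp key with h | h
      · exact absurd h hxyz
      · linear_combination h
    have hveq : v = (-c1) • ![X 0, -X 2, 0, 0] + (-c2) • ![X 1, 0, -X 0, 0] +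
        (-c3) • ![X 2, 0, 0, -X 1] := by
      funext i
      fin_cases i <;>
        · simp only [Fin.zero_eta, Fin.mk_one, show (⟨2, by norm_num⟩ : Fin 4) = 2 from rfl,
            show (⟨3, by norm_num⟩ : Fin 4) = 3 from rfl]
          simp [hv0, hc1, hc2, hc3, Fin.isValue]
          ring
    rw [hveq]
    refine Submodule.add_mem _ (Submodule.add_mem _ ?_ ?_) ?_ <;>
      apply Submodule.smul_mem <;> apply Submodule.subset_span
    · exact Or.inl rfl
    · exact Or.inr (Or.inl rfl)
    · exact Or.inr (Or.inr rfl)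
  · -- span ⊆ ker
    rw [Submodule.span_le]
    rintro w (rfl | rfl | rfl) <;>
      · simp only [SetLike.mem_coe, LinearMap.mem_ker, hφ]
        simp
        ring
end

section
/- Let k be a field, r ≥ 1, and let a₁, …, a_r ∈ k be pairwise distinct. Then in the polynomial ring k[x,y,z], the intersection of ideals (x, y) ∩ ⋂_{j=1}^{r} (z, x + a_j·y) equals the ideal (x·z, y·z, ∏_{j=1}^{r} (x + a_j·y)). -/
open MvPolynomial

section aux
variable {k : Type*} [Field k]

noncomputable def shear (c : k) : MvPolynomial (Fin 3) k ≃ₐ[k] MvPolynomial (Fin 3) k :=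
  AlgEquiv.ofAlgHom
    (aeval (fun i => if i = 0 then X 0 + C c * X 1 else X i))
    (aeval (fun i => if i = 0 then X 0 - C c * X 1 else X i))
    (by apply MvPolynomial.algHom_ext; intro i; fin_cases i <;> simp)
    (by apply MvPolynomial.algHom_ext; intro i; fin_cases i <;> simp)

lemma prime_X0 : Prime (X 0 : MvPolynomial (Fin 3) k) := by
  rw [← MulEquiv.prime_iff (finSuccEquiv k 2).toMulEquiv]
  simpa [finSuccEquiv_X_zero] using Polynomial.prime_X (R := MvPolynomial (Fin 2) k)

lemma prime_lin (c : k) : Prime (X 0 + C c * X 1 : MvPolynomial (Fin 3) k) := by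
  have h := (MulEquiv.prime_iff (shear c).toMulEquiv).mpr (prime_X0 (k := k))
  simpa [shear] using h

lemma sub_aeval_mem (S : Set (MvPolynomial (Fin 3) k)) (g : Fin 3 → MvPolynomial (Fin 3) k)
    (hg : ∀ i, X i - g i ∈ Ideal.span S) (f : MvPolynomial (Fin 3) k) :
    f - aeval g f ∈ Ideal.span S := by
  induction f using MvPolynomial.induction_on with
  | C c => simp
  | add p q hp hq => simpa [add_sub_add_comm] using Ideal.add_mem _ hp hq
  | mul_X p i hp =>
      have : p * X i - aeval g (p * X i) =
          (p - aeval g p) * X i + aeval g p * (X i - g i) := by simp; ring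
      rw [this]
      exact Ideal.add_mem _ (Ideal.mul_mem_right _ _ hp) (Ideal.mul_mem_left _ _ (hg i))

lemma prod_dvd {ι : Type*} {A : Type*} [CommRing A] [IsDomain A] (s : Finset ι) (p : ι → A)
    (hp : ∀ i, Prime (p i)) (hnd : ∀ i j, i ≠ j → ¬ p i ∣ p j) (f : A)
    (h : ∀ i, p i ∣ f) : (∏ i ∈ s, p i) ∣ f := by
  classical
  induction s using Finset.induction_on with
  | empty => simp
  | @insert i s hi ih =>
    obtain ⟨c, hc⟩ := ih
    have hni : ¬ p i ∣ ∏ j ∈ s, p j := by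
      intro hd
      obtain ⟨j, hj, hdj⟩ := (hp i).exists_mem_finset_dvd hd
      exact hnd i j (fun e => hi (e ▸ hj)) hdj
    have : p i ∣ c := by
      rcases (hp i).2.2 _ _ (hc ▸ h i) with h' | h'
      · exact absurd h' hni
      · exact h'
    obtain ⟨d, hd⟩ := this
    exact ⟨d, by rw [Finset.prod_insert hi, hc, hd]; ring⟩
end aux

/-- In `k[x,y,z]`, for pairwise distinct `a₁, …, a_r ∈ k` with `r ≥ 1`,
`(x,y) ∩ ⋂_{j} (z, x + a_j y) = (xz, yz, ∏_j (x + a_j y))`. -/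
theorem stmt_7 (k : Type*) [Field k] (r : ℕ) (hr : 1 ≤ r) (a : Fin r → k)
    (ha : Function.Injective a) :
    (Ideal.span {(X 0 : MvPolynomial (Fin 3) k), X 1} ⊓
        ⨅ j : Fin r, Ideal.span {(X 2 : MvPolynomial (Fin 3) k), X 0 + C (a j) * X 1}) =
      Ideal.span {(X 0 : MvPolynomial (Fin 3) k) * X 2, X 1 * X 2,
        ∏ j : Fin r, (X 0 + C (a j) * X 1)} := by
  classical
  set p : Fin r → MvPolynomial (Fin 3) k := fun j => X 0 + C (a j) * X 1 with hp_def
  set P : MvPolynomial (Fin 3) k := ∏ j : Fin r, p j with hP_def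
  have hX0 : (X 0 : MvPolynomial (Fin 3) k) ∈ Ideal.span {(X 0 : MvPolynomial (Fin 3) k), X 1} :=
    Ideal.subset_span (by simp)
  have hX1 : (X 1 : MvPolynomial (Fin 3) k) ∈ Ideal.span {(X 0 : MvPolynomial (Fin 3) k), X 1} :=
    Ideal.subset_span (by simp)
  have hpmem : ∀ j, p j ∈ Ideal.span {(X 0 : MvPolynomial (Fin 3) k), X 1} := fun j =>
    Ideal.add_mem _ hX0 (Ideal.mul_mem_left _ _ hX1)
  have hPmem : P ∈ Ideal.span {(X 0 : MvPolynomial (Fin 3) k), X 1} := by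
    obtain ⟨c, hc⟩ := Finset.dvd_prod_of_mem p (Finset.mem_univ (⟨0, hr⟩ : Fin r))
    rw [hP_def, hc]
    exact Ideal.mul_mem_right _ _ (hpmem _)
  have hprime : ∀ j, Prime (p j) := fun j => prime_lin (a j)
  have hnd : ∀ i j : Fin r, i ≠ j → ¬ p i ∣ p j := by
    intro i j hij hd
    obtain ⟨c, hc⟩ := hd
    have := congrArg (eval (fun n : Fin 3 => if n = 0 then -(a i) else if n = 1 then 1 else 0)) hc
    simp [hp_def] at this
    exact hij (ha (by linear_combination -this))
  apply le_antisymm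
  · -- hard direction
    intro f hf
    obtain ⟨hf1, hf2⟩ := Ideal.mem_inf.mp hf
    rw [Ideal.mem_iInf] at hf2
    set φ : MvPolynomial (Fin 3) k →ₐ[k] MvPolynomial (Fin 3) k :=
      aeval (fun i => if i = 2 then 0 else X i) with hφ
    have hker : f - φ f ∈ Ideal.span {(X 2 : MvPolynomial (Fin 3) k)} := by
      apply sub_aeval_mem
      intro i
      fin_cases i <;> simp [Ideal.mem_span_singleton]
    have hφp : ∀ j, φ (p j) = p j := by intro j; simp [hφ, hp_def]
    have h2 : φ (X 2) = 0 := by simp [hφ]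
    have hdvd : ∀ j, p j ∣ φ f := by
      intro j
      obtain ⟨u, v, huv⟩ := Ideal.mem_span_pair.mp (hf2 j)
      have hc := congrArg φ huv
      rw [map_add, map_mul, map_mul, h2, mul_zero, zero_add, hφp] at hc
      exact ⟨φ v, by rw [← hc]; ring⟩
    obtain ⟨g1, hg1⟩ : P ∣ φ f := prod_dvd Finset.univ p hprime hnd _ hdvd
    obtain ⟨w, hw⟩ : (X 2 : MvPolynomial (Fin 3) k) ∣ f - φ f :=
      Ideal.mem_span_singleton.mp hker
    have hfw : f = P * g1 + X 2 * w := by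
      have : f = (f - φ f) + φ f := by ring
      rw [this, hw, hg1]; ring
    have hzw : (X 2 : MvPolynomial (Fin 3) k) * w ∈ Ideal.span {(X 0 : MvPolynomial (Fin 3) k), X 1} := by
      have h' : (X 2 : MvPolynomial (Fin 3) k) * w = f - P * g1 := by rw [hfw]; ring
      rw [h']
      exact Ideal.sub_mem _ hf1 (Ideal.mul_mem_right _ _ hPmem)
    set ψ : MvPolynomial (Fin 3) k →ₐ[k] MvPolynomial (Fin 3) k :=
      aeval (fun i => if i = 2 then X 2 else 0) with hψ
    have hψw : ψ w = 0 := by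
      obtain ⟨α, β, hab⟩ := Ideal.mem_span_pair.mp hzw
      have hc := congrArg ψ hab
      have e0 : ψ (X 0) = 0 := by simp [hψ]
      have e1 : ψ (X 1) = 0 := by simp [hψ]
      have e2 : ψ (X 2) = X 2 := by simp [hψ]
      rw [map_add, map_mul, map_mul, map_mul, e0, e1, e2, mul_zero, mul_zero, add_zero] at hc
      rcases mul_eq_zero.mp hc.symm with hc | hc
      · exact absurd hc (MvPolynomial.X_ne_zero 2)
      · exact hc
    have hwmem : w ∈ Ideal.span {(X 0 : MvPolynomial (Fin 3) k), X 1} := by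
      have hs := sub_aeval_mem {(X 0 : MvPolynomial (Fin 3) k), X 1}
        (fun i => if i = 2 then X 2 else 0) ?_ w
      · simpa [← hψ, hψw] using hs
      · intro i
        fin_cases i
        · simpa using hX0
        · simpa using hX1
        · simp
    obtain ⟨α, β, hab⟩ := Ideal.mem_span_pair.mp hwmem
    have hfin : f = α * (X 0 * X 2) + β * (X 1 * X 2) + g1 * P := by
      rw [hfw, ← hab]; ring
    rw [hfin]
    refine Ideal.add_mem _ (Ideal.add_mem _ ?_ ?_) ?_ <;>
      exact Ideal.mul_mem_left _ _ (Ideal.subset_span (by simp))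
  · rw [Ideal.span_le]
    rintro x hx
    simp only [Set.mem_insert_iff, Set.mem_singleton_iff] at hx
    rw [SetLike.mem_coe, Ideal.mem_inf]
    rcases hx with rfl | rfl | rfl
    · exact ⟨Ideal.mul_mem_right _ _ hX0, Ideal.mem_iInf.mpr fun j =>
        Ideal.mul_mem_left _ _ (Ideal.subset_span (by simp))⟩
    · exact ⟨Ideal.mul_mem_right _ _ hX1, Ideal.mem_iInf.mpr fun j =>
        Ideal.mul_mem_left _ _ (Ideal.subset_span (by simp))⟩
    · refine ⟨hPmem, Ideal.mem_iInf.mpr fun j => ?_⟩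
      obtain ⟨c, hc⟩ := Finset.dvd_prod_of_mem p (Finset.mem_univ j)
      rw [hP_def, hc]
      exact Ideal.mul_mem_right _ _ (Ideal.subset_span (by simp [hp_def]))
end

section
/- Let d > 1 and let r be a natural number with (d+1)d/2 ≤ r < (d+2)(d+1)/2. Then there exist vectors v₁, …, v_r ∈ ℂ³, each nonzero and pairwise non-proportional, and a homogeneous polynomial F of degree d in ℂ[x₀,x₁,x₂], such that: (i) F(v_i) = 0 for all i; (ii) the only common zero in ℂ³ of the three partial derivatives ∂F/∂x₀, ∂F/∂x₁, ∂F/∂x₂ is the origin (i.e. F defines a smooth plane curve of degree d); and (iii) the only homogeneous polynomial of degree d−1 vanishing at all the v_i is the zero polynomial. -/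
open MvPolynomial

noncomputable section StmtNineAux

namespace StmtNine

/-- Total degree bound for substitution by polynomials of total degree ≤ 1. -/
lemma tdeg_aeval_le {n m : ℕ} (f : Fin n → MvPolynomial (Fin m) ℂ)
    (hf : ∀ i, (f i).totalDegree ≤ 1) (p : MvPolynomial (Fin n) ℂ) :
    (aeval f p).totalDegree ≤ p.totalDegree := by
  conv_lhs => rw [p.as_sum, map_sum]
  refine (MvPolynomial.totalDegree_finset_sum _ _).trans ?_
  refine Finset.sup_le fun u hu => ?_
  rw [aeval_monomial]
  refine (MvPolynomial.totalDegree_mul _ _).trans ?_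
  have h1 : (algebraMap ℂ (MvPolynomial (Fin m) ℂ) (coeff u p)).totalDegree = 0 := by
    simpa using MvPolynomial.totalDegree_C (σ := Fin m) (coeff u p)
  rw [h1, zero_add]
  refine (MvPolynomial.totalDegree_finset_prod _ _).trans ?_
  have h2 : ∀ i ∈ u.support, ((f i) ^ (u i)).totalDegree ≤ u i := by
    intro i _
    refine (MvPolynomial.totalDegree_pow _ _).trans ?_
    calc u i * (f i).totalDegree ≤ u i * 1 := Nat.mul_le_mul_left _ (hf i)
    _ = u i := Nat.mul_one _
  refine (Finset.sum_le_sum h2).trans ?_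
  exact MvPolynomial.le_totalDegree hu

/-- natDegree bound for substitution by univariate polynomials of degree ≤ 1. -/
lemma ndeg_aeval_le {n : ℕ} (f : Fin n → Polynomial ℂ)
    (hf : ∀ i, (f i).natDegree ≤ 1) (p : MvPolynomial (Fin n) ℂ) :
    (aeval f p).natDegree ≤ p.totalDegree := by
  conv_lhs => rw [p.as_sum, map_sum]
  refine Polynomial.natDegree_sum_le_of_forall_le _ _ fun u hu => ?_
  rw [aeval_monomial]
  refine (Polynomial.natDegree_mul_le).trans ?_
  have h1 : (algebraMap ℂ (Polynomial ℂ) (coeff u p)).natDegree = 0 :=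
    Polynomial.natDegree_C _
  rw [h1, zero_add]
  refine (Polynomial.natDegree_prod_le _ _).trans ?_
  have h2 : ∀ i ∈ u.support, ((f i) ^ (u i)).natDegree ≤ u i := by
    intro i _
    refine (Polynomial.natDegree_pow_le).trans ?_
    calc u i * (f i).natDegree ≤ u i * 1 := Nat.mul_le_mul_left _ (hf i)
    _ = u i := Nat.mul_one _
  refine (Finset.sum_le_sum h2).trans ?_
  exact MvPolynomial.le_totalDegree hu

lemma eval_aeval₂ (a t : ℂ) (g : MvPolynomial (Fin 2) ℂ) :
    Polynomial.eval t (aeval ![Polynomial.C a, Polynomial.X] g) = eval ![a, t] g := by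
  have h : (Polynomial.evalRingHom t).comp
      ((aeval ![Polynomial.C a, Polynomial.X] : MvPolynomial (Fin 2) ℂ →ₐ[ℂ]
        Polynomial ℂ) : MvPolynomial (Fin 2) ℂ →+* Polynomial ℂ)
      = (eval ![a, t] : MvPolynomial (Fin 2) ℂ →+* ℂ) := by
    apply MvPolynomial.ringHom_ext
    · intro c; simp
    · intro i; fin_cases i <;> simp
  exact RingHom.congr_fun h g

lemma eval_aeval₃ (a b : ℂ) (G : MvPolynomial (Fin 3) ℂ) :
    eval ![a, b] (aeval ![1, X 0, X 1] G) = eval ![(1 : ℂ), a, b] G := by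
  have h : (eval ![a, b] : MvPolynomial (Fin 2) ℂ →+* ℂ).comp
      ((aeval ![1, X 0, X 1] : MvPolynomial (Fin 3) ℂ →ₐ[ℂ]
        MvPolynomial (Fin 2) ℂ) : MvPolynomial (Fin 3) ℂ →+* MvPolynomial (Fin 2) ℂ)
      = (eval ![(1 : ℂ), a, b] : MvPolynomial (Fin 3) ℂ →+* ℂ) := by
    apply MvPolynomial.ringHom_ext
    · intro c; simp
    · intro i; fin_cases i <;> simp
  exact RingHom.congr_fun h G

lemma coeff_aeval_zero_X (q : MvPolynomial (Fin 2) ℂ) (j : ℕ) :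
    (aeval ![(0 : Polynomial ℂ), Polynomial.X] q).coeff j
      = q.coeff (Finsupp.single 1 j) := by
  induction q using MvPolynomial.induction_on' with
  | add p q hp hq => simp [map_add, hp, hq]
  | monomial u c =>
    rw [aeval_monomial, Finsupp.prod_fintype _ _ (fun i => pow_zero _), Fin.prod_univ_two]
    simp only [Matrix.cons_val_zero, Matrix.cons_val_one, Matrix.head_cons]
    by_cases h0 : u 0 = 0
    · have hu : u = Finsupp.single 1 (u 1) := by
        ext i
        fin_cases i
        · simp [h0]
        · simp
      rw [h0, pow_zero, one_mul]
      have halg : (algebraMap ℂ (Polynomial ℂ) c) = Polynomial.C c := rfl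
      rw [halg, Polynomial.coeff_C_mul, Polynomial.coeff_X_pow, MvPolynomial.coeff_monomial]
      by_cases hj : j = u 1
      · rw [if_pos hj, mul_one, if_pos (by rw [hu, hj])]
      · rw [if_neg hj, mul_zero, if_neg
          (fun hc => hj (by simpa using (DFunLike.congr_fun hc 1).symm))]
    · rw [zero_pow h0, zero_mul, mul_zero, MvPolynomial.coeff_monomial, if_neg]
      · simp
      · intro hc
        apply h0
        have := DFunLike.congr_fun hc 0
        simpa using this

lemma X0_dvd {q : MvPolynomial (Fin 2) ℂ}
    (hq : aeval ![(0 : Polynomial ℂ), Polynomial.X] q = 0) : X 0 ∣ q := by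
  rw [MvPolynomial.X_dvd_iff_modMonomial_eq_zero]
  ext s
  by_cases h : Finsupp.single (0 : Fin 2) 1 ≤ s
  · rw [MvPolynomial.coeff_modMonomial_of_le _ h, MvPolynomial.coeff_zero]
  · rw [MvPolynomial.coeff_modMonomial_of_not_le _ h, MvPolynomial.coeff_zero]
    have h0 : s 0 = 0 := by
      by_contra h0
      exact h (Finsupp.single_le_iff.mpr (Nat.one_le_iff_ne_zero.mpr h0))
    have hs : s = Finsupp.single 1 (s 1) := by
      ext i
      fin_cases i
      · simp [h0]
      · simp
    rw [hs, ← coeff_aeval_zero_X, hq, Polynomial.coeff_zero]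

lemma le_tdeg_X0_mul (h0 : MvPolynomial (Fin 2) ℂ) (h : h0 ≠ 0) :
    h0.totalDegree + 1 ≤ (X 0 * h0).totalDegree := by
  have hne : h0.support.Nonempty :=
    Finset.nonempty_iff_ne_empty.mpr (fun hc => h (MvPolynomial.support_eq_empty.mp hc))
  obtain ⟨u, hu, hdeg⟩ := Finset.exists_mem_eq_sup h0.support hne
    (fun s : Fin 2 →₀ ℕ => s.sum fun _ e => e)
  have hc : coeff (Finsupp.single 0 1 + u) (X 0 * h0) = coeff u h0 :=
    MvPolynomial.coeff_X_mul u 0 h0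
  have hmem : (Finsupp.single 0 1 + u) ∈ (X 0 * h0).support := by
    rw [MvPolynomial.mem_support_iff, hc]
    exact MvPolynomial.mem_support_iff.mp hu
  have hle := MvPolynomial.le_totalDegree hmem
  have hsum : ((Finsupp.single (0 : Fin 2) 1 + u).sum fun _ e => e)
      = 1 + (u.sum fun _ e => e) := by
    rw [Finsupp.sum_add_index (by simp) (by simp)]
    simp [Finsupp.sum_single_index]
  rw [hsum] at hle
  have : h0.totalDegree = u.sum fun _ e => e := hdeg
  omega

/-- The staircase interpolation lemma in the affine plane. -/
lemma affine_vanish (e : ℕ) : ∀ (g : MvPolynomial (Fin 2) ℂ), g.totalDegree ≤ e →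
    ∀ (A : ℕ → ℂ), Function.Injective A →
    ∀ (z : ℕ → ℕ → ℂ),
      (∀ k j j', k ≤ e → j ≤ e - k → j' ≤ e - k → z k j = z k j' → j = j') →
      (∀ k j, k ≤ e → j ≤ e - k → eval ![A k, z k j] g = 0) → g = 0 := by
  induction e with
  | zero =>
    intro g hg A _ z _ hv
    have h0 : ∀ m : Fin 2 →₀ ℕ, m ∈ g.support → m = 0 := by
      intro m hm
      have := (MvPolynomial.totalDegree_eq_zero_iff _ g).mp (Nat.le_zero.mp hg) m hm
      ext i; exact this i
    have hgC : g = C (coeff 0 g) := by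
      apply MvPolynomial.ext
      intro m
      rw [MvPolynomial.coeff_C]
      by_cases hm : m = 0
      · subst hm; simp
      · rw [if_neg (fun hc => hm hc.symm)]
        by_contra hc
        exact hm (h0 m (MvPolynomial.mem_support_iff.mpr hc))
    have := hv 0 0 le_rfl le_rfl
    rw [hgC] at this ⊢
    rw [eval_C] at this
    rw [this, map_zero]
  | succ e IH =>
    intro g hg A hA z hz hv
    set a := A 0 with ha
    -- the restriction of `g` to the first line is zero
    have hu0 : (aeval ![Polynomial.C a, Polynomial.X] g : Polynomial ℂ) = 0 := by
      apply Polynomial.eq_zero_of_natDegree_lt_card_of_eval_eq_zero _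
        (f := fun j : Fin (e + 2) => z 0 j)
      · intro x y hxy
        have hx : (x : ℕ) ≤ e + 1 - 0 := by omega
        have hy : (y : ℕ) ≤ e + 1 - 0 := by omega
        exact Fin.ext (hz 0 x y (Nat.zero_le _) hx hy hxy)
      · intro j
        rw [eval_aeval₂]
        exact hv 0 j (Nat.zero_le _) (by omega)
      · have := (ndeg_aeval_le ![Polynomial.C a, Polynomial.X]
          (by intro i; fin_cases i <;> simp) g).trans hg
        convert Nat.lt_succ_of_le this using 1
        simp
    -- shear transformations
    set τ : MvPolynomial (Fin 2) ℂ →ₐ[ℂ] MvPolynomial (Fin 2) ℂ :=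
      aeval ![X 0 + C a, X 1] with hτ
    set τ' : MvPolynomial (Fin 2) ℂ →ₐ[ℂ] MvPolynomial (Fin 2) ℂ :=
      aeval ![X 0 - C a, X 1] with hτ'
    have hXdvd : X 0 ∣ τ g := by
      apply X0_dvd
      have hcomp : ((aeval ![(0 : Polynomial ℂ), Polynomial.X] :
          MvPolynomial (Fin 2) ℂ →ₐ[ℂ] Polynomial ℂ)).comp τ
          = aeval ![Polynomial.C a, Polynomial.X] := by
        apply MvPolynomial.algHom_ext
        intro i; fin_cases i <;>
          simp [hτ, MvPolynomial.algebraMap_eq, Polynomial.algebraMap_eq]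
      have := AlgHom.congr_fun hcomp g
      simp only [AlgHom.comp_apply] at this
      rw [this, hu0]
    obtain ⟨h0, hh0⟩ := hXdvd
    have hτdeg : (τ g).totalDegree ≤ e + 1 := by
      refine (tdeg_aeval_le _ ?_ g).trans hg
      intro i; fin_cases i
      · refine (MvPolynomial.totalDegree_add _ _).trans ?_
        simp [MvPolynomial.totalDegree_X, MvPolynomial.totalDegree_C]
      · simp [MvPolynomial.totalDegree_X]
    have hh0deg : h0.totalDegree ≤ e := by
      rcases eq_or_ne h0 0 with rfl | hne
      · simp
      · have h1 := le_tdeg_X0_mul h0 hne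
        rw [← hh0] at h1
        omega
    have hid : ∀ p, τ' (τ p) = p := by
      intro p
      have hcomp : τ'.comp τ = AlgHom.id ℂ _ := by
        apply MvPolynomial.algHom_ext
        intro i; fin_cases i <;>
          simp [hτ, hτ', MvPolynomial.algebraMap_eq]
      have := AlgHom.congr_fun hcomp p
      simpa using this
    set h := τ' h0 with hh
    have hfact : g = (X 0 - C a) * h := by
      have h1 := hid g
      rw [hh0, map_mul] at h1
      have h2 : τ' (X 0) = X 0 - C a := by simp [hτ', MvPolynomial.algebraMap_eq]
      rw [h2] at h1
      exact h1.symm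
    have hhdeg : h.totalDegree ≤ e := by
      refine (tdeg_aeval_le _ ?_ h0).trans hh0deg
      intro i; fin_cases i
      · refine (MvPolynomial.totalDegree_sub _ _).trans ?_
        simp [MvPolynomial.totalDegree_X, MvPolynomial.totalDegree_C]
      · simp [MvPolynomial.totalDegree_X]
    have hv' : ∀ k j, k ≤ e → j ≤ e - k → eval ![A (k + 1), z (k + 1) j] h = 0 := by
      intro k j hk hj
      have h1 : eval ![A (k + 1), z (k + 1) j] g = 0 := hv (k + 1) j (by omega) (by omega)
      rw [hfact, map_mul] at h1
      rcases mul_eq_zero.mp h1 with h2 | h2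
      · exfalso
        have h3 : A (k + 1) - a = 0 := by simpa using h2
        have h4 : A (k + 1) = A 0 := (sub_eq_zero.mp h3).trans ha
        exact absurd (hA h4) (by omega)
      · exact h2
    have hzero : h = 0 := by
      refine IH h hhdeg (fun k => A (k + 1)) ?_ (fun k j => z (k + 1) j) ?_ hv'
      · intro x y hxy
        have := hA hxy
        omega
      · intro k j j' hk hj hj' hzz
        exact hz (k + 1) j j' (by omega) (by omega) (by omega) hzz
    rw [hfact, hzero, mul_zero]

lemma deg3 (m : Fin 3 →₀ ℕ) : Finsupp.degree m = m 0 + m 1 + m 2 := by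
  rw [Finsupp.degree_apply]
  rw [Finset.sum_subset (Finset.subset_univ m.support)
    (fun i _ hi => Finsupp.notMem_support_iff.mp hi)]
  simp [Fin.sum_univ_three]

/-- Dehomogenization (setting `x₀ = 1`) is injective on homogeneous polynomials. -/
lemma dehom_inj {e : ℕ} (G : MvPolynomial (Fin 3) ℂ) (hG : G.IsHomogeneous e)
    (h : (aeval ![1, X 0, X 1] G : MvPolynomial (Fin 2) ℂ) = 0) : G = 0 := by
  classical
  apply MvPolynomial.ext
  intro m
  rw [MvPolynomial.coeff_zero]
  by_contra hm
  have hmdeg : Finsupp.degree m = e := by rw [Finsupp.degree_eq_weight_one]; exact hG hm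
  have hterm : ∀ u : Fin 3 →₀ ℕ,
      (aeval ![1, X 0, X 1] (monomial u (coeff u G)) : MvPolynomial (Fin 2) ℂ)
      = monomial (Finsupp.single 0 (u 1) + Finsupp.single 1 (u 2)) (coeff u G) := by
    intro u
    rw [aeval_monomial, Finsupp.prod_fintype _ _ (fun i => pow_zero _), Fin.prod_univ_three]
    simp only [Matrix.cons_val_zero, Matrix.cons_val_one, Matrix.head_cons, one_pow, one_mul,
      Matrix.cons_val_two, Matrix.tail_cons]
    have halg : (algebraMap ℂ (MvPolynomial (Fin 2) ℂ) (coeff u G)) = C (coeff u G) := rfl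
    rw [halg, MvPolynomial.X_pow_eq_monomial, MvPolynomial.X_pow_eq_monomial,
      MvPolynomial.monomial_mul, MvPolynomial.C_mul_monomial, one_mul, mul_one]
  have key : (aeval ![1, X 0, X 1] G : MvPolynomial (Fin 2) ℂ).coeff
      (Finsupp.single 0 (m 1) + Finsupp.single 1 (m 2)) = coeff m G := by
    conv_lhs => rw [G.as_sum, map_sum]
    rw [MvPolynomial.coeff_sum]
    rw [Finset.sum_eq_single m]
    · rw [hterm, MvPolynomial.coeff_monomial, if_pos rfl]
    · intro u hu hum
      rw [hterm, MvPolynomial.coeff_monomial, if_neg]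
      intro hc
      apply hum
      have h1 : u 1 = m 1 := by
        have := DFunLike.congr_fun hc (0 : Fin 2)
        simpa using this
      have h2 : u 2 = m 2 := by
        have := DFunLike.congr_fun hc (1 : Fin 2)
        simpa using this
      have hudeg : Finsupp.degree u = e := by
        rw [Finsupp.degree_eq_weight_one]; exact hG (MvPolynomial.mem_support_iff.mp hu)
      rw [deg3] at hudeg hmdeg
      have h0 : u 0 = m 0 := by omega
      ext i
      fin_cases i <;> assumption
    · intro hns
      exact absurd (MvPolynomial.mem_support_iff.mpr hm) hns
  rw [h] at key
  rw [MvPolynomial.coeff_zero] at key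
  exact hm key.symm

end StmtNine

end StmtNineAux

/-- For `d > 1` and `(d+1)d/2 ≤ r < (d+2)(d+1)/2`, there exist `r` nonzero, pairwise
non-proportional vectors in `ℂ³` and a homogeneous polynomial `F` of degree `d` such that
(i) `F` vanishes at all the vectors; (ii) the only common zero of the partial derivatives of
`F` is the origin (`F` defines a smooth plane curve); (iii) no nonzero homogeneous polynomial
of degree `d - 1` vanishes at all the vectors. -/
theorem stmt_9 (d r : ℕ) (hd : 1 < d) (hr₁ : (d + 1) * d / 2 ≤ r)
    (hr₂ : r < (d + 2) * (d + 1) / 2) :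
    ∃ v : Fin r → (Fin 3 → ℂ), ∃ F : MvPolynomial (Fin 3) ℂ,
      (∀ i, v i ≠ 0) ∧
      (∀ i j, i ≠ j → ∀ c : ℂ, v i ≠ c • v j) ∧
      F.IsHomogeneous d ∧
      (∀ i, MvPolynomial.eval (v i) F = 0) ∧
      (∀ w : Fin 3 → ℂ, (∀ m : Fin 3, MvPolynomial.eval w (MvPolynomial.pderiv m F) = 0) →
        w = 0) ∧
      (∀ G : MvPolynomial (Fin 3) ℂ, G.IsHomogeneous (d - 1) →
        (∀ i, MvPolynomial.eval (v i) G = 0) → G = 0) := by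
  classical
  -- arithmetic bookkeeping
  set q : ℕ := d * (d + 1) / 2 with hqdef
  have h2q : q * 2 = d * (d + 1) :=
    Nat.div_mul_cancel ((Nat.even_mul_succ_self d).two_dvd)
  have hq_le : q ≤ r := by
    have : (d + 1) * d = d * (d + 1) := by ring
    rw [hqdef, ← this]; exact hr₁
  have hrlt : r < q + (d + 1) := by
    have h1 : (d + 2) * (d + 1) = d * (d + 1) + 2 * (d + 1) := by ring
    have h2 : (d + 2) * (d + 1) / 2 = q + (d + 1) := by
      rw [h1, Nat.add_mul_div_left _ _ (by norm_num : 0 < 2), hqdef]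
    rw [h2] at hr₂; exact hr₂
  set m : ℕ := r - q with hmdef
  have hmd : m ≤ d := by omega
  -- the staircase line sizes
  set n : Fin (d + 1) → ℕ := fun k => if (k : ℕ) < d then d - (k : ℕ) else m with hn
  have hnd : ∀ k, n k ≤ d := by
    intro k; rw [hn]; dsimp only; split <;> omega
  -- counting
  have gauss : ∑ k ∈ Finset.range d, (d - k) = q := by
    have h1 : ∑ k ∈ Finset.range d, (d - k) = ∑ k ∈ Finset.range d, (k + 1) := by
      rw [← Finset.sum_range_reflect (fun j => j + 1) d]
      apply Finset.sum_congr rfl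
      intro x hx
      have := Finset.mem_range.mp hx
      omega
    have h2 : ∑ k ∈ Finset.range (d + 1), k = (∑ k ∈ Finset.range d, (k + 1)) + 0 :=
      Finset.sum_range_succ' (fun k => k) d
    have h3 := Finset.sum_range_id_mul_two (d + 1)
    have h4 : d + 1 - 1 = d := rfl
    rw [h4] at h3
    have hcomm : (d + 1) * d = d * (d + 1) := by ring
    omega
  have hsum : ∑ k : Fin (d + 1), n k = r := by
    have h1 : ∑ k : Fin (d + 1), n k
        = ∑ k ∈ Finset.range (d + 1), (if k < d then d - k else m) := by
      rw [Fin.sum_univ_eq_sum_range (fun k => if k < d then d - k else m) (d + 1)]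
    rw [h1, Finset.sum_range_succ, if_neg (lt_irrefl d)]
    have h2 : ∑ k ∈ Finset.range d, (if k < d then d - k else m)
        = ∑ k ∈ Finset.range d, (d - k) := by
      apply Finset.sum_congr rfl
      intro x hx
      rw [if_pos (Finset.mem_range.mp hx)]
    rw [h2, gauss]
    omega
  have hcard : Fintype.card ((k : Fin (d + 1)) × Fin (n k)) = r := by
    rw [Fintype.card_sigma]
    simpa using hsum
  let S : ((k : Fin (d + 1)) × Fin (n k)) ≃ Fin r := Fintype.equivFinOfCardEq hcard
  -- roots of unity and the d-th roots on each line
  have hd0 : d ≠ 0 := by omega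
  set ζ : ℂ := Complex.exp (2 * Real.pi * Complex.I / d) with hζdef
  have hζ : IsPrimitiveRoot ζ d := Complex.isPrimitiveRoot_exp d hd0
  have hroot : ∀ k : Fin (d + 1), ∃ wk : ℂ,
      wk ^ d = -(1 + ((((k : ℕ) + 1 : ℕ)) : ℂ) ^ d) := fun k =>
    IsAlgClosed.exists_pow_nat_eq _ (by omega)
  choose w hw using hroot
  have hwne : ∀ k, w k ≠ 0 := by
    intro k hk
    have h1 := hw k
    rw [hk, zero_pow hd0] at h1
    have h2 : ((((k : ℕ) + 1 : ℕ)) : ℂ) ^ d = ((((k : ℕ) + 1) ^ d : ℕ) : ℂ) := by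
      push_cast; ring
    rw [h2] at h1
    have h3 : ((1 + ((k : ℕ) + 1) ^ d : ℕ) : ℂ) ≠ 0 := by
      rw [Nat.cast_ne_zero]
      positivity
    apply h3
    rw [Nat.cast_add, Nat.cast_one]
    linear_combination h1
  -- the points
  set pt : Fin (d + 1) → ℕ → (Fin 3 → ℂ) :=
    fun k j => ![1, ((((k : ℕ) + 1 : ℕ)) : ℂ), ζ ^ j * w k] with hpt
  set v : Fin r → (Fin 3 → ℂ) := fun i => pt (S.symm i).1 ((S.symm i).2 : ℕ) with hv
  -- the Fermat curve
  set F : MvPolynomial (Fin 3) ℂ := X 0 ^ d + X 1 ^ d + X 2 ^ d with hF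
  -- injectivity of the point configuration
  have hptinj : ∀ (k k' : Fin (d + 1)) (j j' : ℕ), j < n k → j' < n k' →
      pt k j = pt k' j' → k = k' ∧ j = j' := by
    intro k k' j j' hj hj' hpteq
    have h1 := congrFun hpteq 1
    have h2 := congrFun hpteq 2
    simp only [hpt, Matrix.cons_val_one, Matrix.head_cons, Matrix.cons_val_two,
      Matrix.tail_cons] at h1 h2
    have hkk : k = k' := by
      have := Nat.cast_inj (R := ℂ).mp h1
      exact Fin.ext (by omega)
    subst hkk
    refine ⟨rfl, ?_⟩
    have h3 : ζ ^ j = ζ ^ j' := mul_right_cancel₀ (hwne k) h2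
    exact hζ.pow_inj (lt_of_lt_of_le hj (hnd k)) (lt_of_lt_of_le hj' (hnd k)) h3
  refine ⟨v, F, ?_, ?_, ?_, ?_, ?_, ?_⟩
  · -- nonzero
    intro i hzero
    have := congrFun hzero 0
    simp [hv, hpt] at this
  · -- pairwise non-proportional
    intro i i' hii c hcon
    have h0 := congrFun hcon 0
    have hc1 : c = 1 := by
      simpa [hv, hpt] using h0.symm
    rw [hc1, one_smul] at hcon
    have h1 := hptinj _ _ _ _ ((S.symm i).2.isLt) ((S.symm i').2.isLt) hcon
    apply hii
    have hsig : ∀ (x y : (k : Fin (d + 1)) × Fin (n k)),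
        x.1 = y.1 → ((x.2 : ℕ) = (y.2 : ℕ)) → x = y := by
      rintro ⟨a, b⟩ ⟨a', b'⟩ hfst hsnd
      dsimp only at hfst hsnd
      subst hfst
      rw [Fin.ext hsnd]
    have h2 : S.symm i = S.symm i' := hsig _ _ h1.1 h1.2
    have := congrArg S h2
    simpa using this
  · -- homogeneous of degree d
    rw [hF]
    exact ((isHomogeneous_X_pow 0 d).add (isHomogeneous_X_pow 1 d)).add
      (isHomogeneous_X_pow 2 d)
  · -- F vanishes at the points
    intro i
    rw [hv, hF]
    set k := (S.symm i).1
    set j := ((S.symm i).2 : ℕ)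
    have hz : (ζ ^ j * w k) ^ d = -(1 + ((((k : ℕ) + 1 : ℕ)) : ℂ) ^ d) := by
      rw [mul_pow, ← pow_mul, mul_comm j d, pow_mul, hζ.pow_eq_one, one_pow, one_mul, hw k]
    simp only [hpt, map_add, eval_pow, eval_X, Matrix.cons_val_zero, Matrix.cons_val_one,
      Matrix.head_cons, Matrix.cons_val_two, Matrix.tail_cons, hz, one_pow]
    have hw' := hw (S.symm i).fst
    have hζd : ζ ^ (d * ((S.symm i).snd : ℕ)) = 1 := by rw [pow_mul, hζ.pow_eq_one, one_pow]
    rw [mul_pow, ← pow_mul, mul_comm _ d, hζd, one_mul, hw']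
    push_cast
    ring
  · -- smoothness
    intro wv hwv
    have hdC : (d : ℂ) ≠ 0 := Nat.cast_ne_zero.mpr hd0
    have e0 := hwv 0
    have e1 := hwv 1
    have e2 := hwv 2
    rw [hF] at e0 e1 e2
    simp only [map_add, pderiv_pow, pderiv_X_self,
      pderiv_X_of_ne (show (1 : Fin 3) ≠ 0 by decide),
      pderiv_X_of_ne (show (2 : Fin 3) ≠ 0 by decide),
      mul_zero, mul_one, add_zero, zero_add, map_mul, eval_pow, eval_X,
      map_natCast] at e0
    simp only [map_add, pderiv_pow, pderiv_X_self,
      pderiv_X_of_ne (show (0 : Fin 3) ≠ 1 by decide),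
      pderiv_X_of_ne (show (2 : Fin 3) ≠ 1 by decide),
      mul_zero, mul_one, add_zero, zero_add, map_mul, eval_pow, eval_X,
      map_natCast] at e1
    simp only [map_add, pderiv_pow, pderiv_X_self,
      pderiv_X_of_ne (show (0 : Fin 3) ≠ 2 by decide),
      pderiv_X_of_ne (show (1 : Fin 3) ≠ 2 by decide),
      mul_zero, mul_one, add_zero, zero_add, map_mul, eval_pow, eval_X,
      map_natCast] at e2
    have k0 : wv 0 = 0 :=
      pow_eq_zero_iff (n := d - 1) (by omega) |>.mp ((mul_eq_zero.mp e0).resolve_left hdC)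
    have k1 : wv 1 = 0 :=
      pow_eq_zero_iff (n := d - 1) (by omega) |>.mp ((mul_eq_zero.mp e1).resolve_left hdC)
    have k2 : wv 2 = 0 :=
      pow_eq_zero_iff (n := d - 1) (by omega) |>.mp ((mul_eq_zero.mp e2).resolve_left hdC)
    funext i
    fin_cases i
    · exact k0
    · exact k1
    · exact k2
  · -- no curve of degree d - 1 through the points
    intro G hGhom hGv
    by_cases hG0 : G = 0
    · exact hG0
    set g : MvPolynomial (Fin 2) ℂ := aeval ![1, X 0, X 1] G with hg
    have hgdeg : g.totalDegree ≤ d - 1 := by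
      rw [hg]
      refine (StmtNine.tdeg_aeval_le _ ?_ G).trans ?_
      · intro i
        fin_cases i <;>
          simp [MvPolynomial.totalDegree_one, MvPolynomial.totalDegree_X]
      · rw [hGhom.totalDegree hG0]
    have hg0 : g = 0 := by
      refine StmtNine.affine_vanish (d - 1) g hgdeg
        (fun k => (((k + 1 : ℕ)) : ℂ)) ?_
        (fun k j => ζ ^ j * (if h : k < d + 1 then w ⟨k, h⟩ else 0)) ?_ ?_
      · intro x y hxy
        have := Nat.cast_inj (R := ℂ).mp hxy
        omega
      · intro k j j' hk hj hj' hzz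
        have hkd : k < d + 1 := by omega
        simp only [dif_pos hkd] at hzz
        have h3 : ζ ^ j = ζ ^ j' := mul_right_cancel₀ (hwne ⟨k, hkd⟩) hzz
        exact hζ.pow_inj (by omega) (by omega) h3
      · intro k j hk hj
        have hkd : k < d + 1 := by omega
        have hkd' : k < d := by omega
        have hjn : j < n ⟨k, hkd⟩ := by
          rw [hn]
          dsimp only
          rw [if_pos hkd']
          omega
        have hvan := hGv (S ⟨⟨k, hkd⟩, ⟨j, hjn⟩⟩)
        simp only [hv] at hvan
        rw [Equiv.symm_apply_apply] at hvan
        simp only [hpt] at hvan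
        rw [hg, StmtNine.eval_aeval₃]
        simp only [dif_pos hkd]
        exact hvan
    exact StmtNine.dehom_inj G hGhom hg0
end

section
/- Let r ≥ 2 and let A, B, a₁, …, a_r ∈ ℂ satisfy B·∏_{j=1}^{r}(A + a_j) ≠ 0. Let R = ℂ⟦x,y,z⟧ be the formal power series ring in three variables over ℂ, and let f = x·z − A·y·z + B·∏_{j=1}^{r}(x + a_j·y) ∈ R. Then there is a ring isomorphism R/(f) ≅ R/(x·z + y^r) between the quotients of R by the principal ideals generated by f and by x·z + y^r. -/
open MvPowerSeries


noncomputable section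
namespace Stmt11Aux

abbrev S := MvPowerSeries (Fin 3) ℂ
variable (σ : Fin 3 → S)

def mdeg (e : Fin 3 →₀ ℕ) : ℕ := ∑ i, e i
lemma apply_le_mdeg (e : Fin 3 →₀ ℕ) (i : Fin 3) : e i ≤ mdeg e :=
  Finset.single_le_sum (fun _ _ => Nat.zero_le _) (Finset.mem_univ i)

lemma mdeg_add (u v : Fin 3 →₀ ℕ) : mdeg (u + v) = mdeg u + mdeg v := by
  simp [mdeg, Finset.sum_add_distrib]
lemma mdeg_eq_zero {e : Fin 3 →₀ ℕ} (h : mdeg e = 0) : e = 0 := by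
  ext i; have h1 := apply_le_mdeg e i; rw [h] at h1; simpa using Nat.le_zero.mp h1
lemma mdeg_single (i : Fin 3) : mdeg (Finsupp.single i 1) = 1 := by
  simp [mdeg, Finsupp.single_apply]

lemma coeff_prodpow_zero (hσ : ∀ i, constantCoeff (σ i) = 0)
    (e m : Fin 3 →₀ ℕ) (h : mdeg e < mdeg m) :
    coeff e (∏ i, σ i ^ m i) = 0 := by
  classical
  suffices H : ∀ n (e m : Fin 3 →₀ ℕ), mdeg e < mdeg m → mdeg e = n →
      coeff e (∏ i, σ i ^ m i) = 0 from H _ e m h rfl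
  clear h e m
  intro n
  induction n using Nat.strong_induction_on with
  | _ n IH =>
  intro e m h hn
  subst hn
  -- find i₀ with m i₀ ≠ 0
  obtain ⟨i₀, hi₀⟩ : ∃ i, m i ≠ 0 := by
    by_contra hc
    push_neg at hc
    have : m = 0 := by ext i; simpa using hc i
    rw [this] at h
    simp [mdeg] at h
  set m' := m - Finsupp.single i₀ 1 with hm'
  have hm : m' + Finsupp.single i₀ 1 = m :=
    tsub_add_cancel_of_le (Finsupp.single_le_iff.mpr (Nat.one_le_iff_ne_zero.mpr hi₀))
  have hprod : ∏ i, σ i ^ m i = σ i₀ * ∏ i, σ i ^ m' i := by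
    calc ∏ i, σ i ^ m i = ∏ i, σ i ^ (m' i + Finsupp.single i₀ 1 i) := by
          refine Finset.prod_congr rfl fun i _ => by rw [← hm]; rfl
      _ = (∏ i, σ i ^ m' i) * ∏ i, σ i ^ (Finsupp.single i₀ 1) i := by
          rw [← Finset.prod_mul_distrib]
          exact Finset.prod_congr rfl fun i _ => pow_add _ _ _
      _ = (∏ i, σ i ^ m' i) * σ i₀ := by
          congr 1
          rw [show (∏ i, σ i ^ (Finsupp.single i₀ 1) i) = ∏ i, if i₀ = i then σ i else 1 from
            Finset.prod_congr rfl fun i _ => by by_cases hii : i₀ = i <;> simp [Finsupp.single_apply, hii]]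
          simp
      _ = σ i₀ * ∏ i, σ i ^ m' i := mul_comm _ _
  rw [hprod, coeff_mul]
  apply Finset.sum_eq_zero
  rintro ⟨u, v⟩ huv
  have huv' : u + v = e := Finset.HasAntidiagonal.mem_antidiagonal.mp huv
  by_cases hu : u = 0
  · simp [hu, coeff_zero_eq_constantCoeff, hσ i₀]
  · have hu1 : 1 ≤ mdeg u := by
      rcases Nat.eq_zero_or_pos (mdeg u) with h0 | h0
      · exact absurd (mdeg_eq_zero h0) hu
      · exact h0
    have hv : mdeg v < mdeg e := by
      have := mdeg_add u v
      rw [huv'] at this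
      omega
    have hmm : mdeg m = mdeg m' + 1 := by rw [← hm, mdeg_add, mdeg_single]
    have hv2 : mdeg v < mdeg m' := by omega
    rw [IH (mdeg v) hv v m' hv2 rfl, mul_zero]

/-- total-degree truncation of a power series, as a polynomial -/
def TT (N : ℕ) (f : S) : MvPolynomial (Fin 3) ℂ :=
  ∑ m ∈ (Finset.Iic (Finsupp.equivFunOnFinite.symm fun _ => N)).filter (fun m => mdeg m < N),
    MvPolynomial.monomial m (coeff m f)

lemma coeff_TT (N : ℕ) (f : S) (e : Fin 3 →₀ ℕ) :
    MvPolynomial.coeff e (TT N f) = if mdeg e < N then coeff e f else 0 := by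
  classical
  rw [TT, MvPolynomial.coeff_sum]
  simp only [MvPolynomial.coeff_monomial]
  rw [Finset.sum_ite_eq' _ e (fun m => coeff m f)]
  by_cases h : mdeg e < N
  · rw [if_pos, if_pos h]
    refine Finset.mem_filter.mpr ⟨Finset.mem_Iic.mpr ?_, h⟩
    rw [Finsupp.le_def]
    intro i
    show e i ≤ N
    exact le_of_lt (lt_of_le_of_lt (apply_le_mdeg e i) h)
  · rw [if_neg, if_neg h]
    intro hmem
    exact h (Finset.mem_filter.mp hmem).2

lemma algebraMap_eq_C (c : ℂ) : algebraMap ℂ S c = C c := by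
  rw [MvPowerSeries.algebraMap_apply]
  simp

lemma coeff_aeval_zero (hσ : ∀ i, constantCoeff (σ i) = 0)
    (P : MvPolynomial (Fin 3) ℂ) (N : ℕ) (hP : ∀ m ∈ P.support, N ≤ mdeg m)
    (e : Fin 3 →₀ ℕ) (he : mdeg e < N) :
    coeff e (MvPolynomial.aeval σ P) = 0 := by
  conv_lhs => rw [P.as_sum]
  rw [map_sum, map_sum]
  apply Finset.sum_eq_zero
  intro m hm
  rw [MvPolynomial.aeval_monomial, Finsupp.prod_pow, algebraMap_eq_C, coeff_C_mul,
    coeff_prodpow_zero σ hσ e m (lt_of_lt_of_le he (hP m hm)), mul_zero]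

/-- substitution of power series into a power series -/
def subst (f : S) : S := fun e => coeff e (MvPolynomial.aeval σ (TT (mdeg e + 1) f))

lemma coeff_subst_def (f : S) (e : Fin 3 →₀ ℕ) :
    coeff e (subst σ f) = coeff e (MvPolynomial.aeval σ (TT (mdeg e + 1) f)) := rfl

lemma coeff_subst (hσ : ∀ i, constantCoeff (σ i) = 0) (f : S)
    (e : Fin 3 →₀ ℕ) {N : ℕ} (hN : mdeg e < N) :
    coeff e (subst σ f) = coeff e (MvPolynomial.aeval σ (TT N f)) := by
  rw [coeff_subst_def]
  have hsub : TT N f = TT (mdeg e + 1) f + (TT N f - TT (mdeg e + 1) f) := by ring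
  have hz : coeff e (MvPolynomial.aeval σ (TT N f - TT (mdeg e + 1) f)) = 0 := by
    refine coeff_aeval_zero σ hσ _ (mdeg e + 1) ?_ e (lt_add_one _)
    intro m hm
    by_contra hlt
    push_neg at hlt
    apply MvPolynomial.mem_support_iff.mp hm
    have h1 : mdeg m < N := lt_of_lt_of_le hlt (by omega)
    simp [coeff_TT, h1, hlt]
  conv_rhs => rw [hsub]
  rw [map_add, map_add, hz, add_zero]

lemma TT_add (N : ℕ) (f g : S) : TT N (f + g) = TT N f + TT N g := by
  apply MvPolynomial.ext
  intro m
  simp only [coeff_TT, MvPolynomial.coeff_add, map_add]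
  split <;> simp

lemma subst_add (f g : S) : subst σ (f + g) = subst σ f + subst σ g := by
  apply MvPowerSeries.ext
  intro e
  rw [map_add, coeff_subst_def, coeff_subst_def, coeff_subst_def, TT_add, map_add, map_add]

lemma TT_one (N : ℕ) (hN : 0 < N) : TT N (1 : S) = 1 := by
  apply MvPolynomial.ext
  intro m
  classical
  rw [coeff_TT, MvPowerSeries.coeff_one, MvPolynomial.coeff_one]
  by_cases h : m = 0
  · subst h
    simp [mdeg, hN]
  · simp [h, Ne.symm h]

lemma subst_one : subst σ (1 : S) = 1 := by
  apply MvPowerSeries.ext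
  intro e
  rw [coeff_subst_def, TT_one _ (by omega), map_one]

lemma subst_C (c : ℂ) : subst σ (C c) = C c := by
  apply MvPowerSeries.ext
  intro e
  rw [coeff_subst_def]
  have : TT (mdeg e + 1) (C c) = MvPolynomial.C c := by
    apply MvPolynomial.ext
    intro m
    classical
    rw [coeff_TT, MvPowerSeries.coeff_C, MvPolynomial.coeff_C]
    by_cases h : m = 0
    · subst h; simp [mdeg]
    · simp [h, Ne.symm h]
  rw [this, MvPolynomial.aeval_C, algebraMap_eq_C]

lemma subst_X (hσ : ∀ i, constantCoeff (σ i) = 0) (i : Fin 3) :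
    subst σ (X i) = σ i := by
  apply MvPowerSeries.ext
  intro e
  rw [coeff_subst σ hσ _ e (show mdeg e < mdeg e + 2 by omega)]
  have : TT (mdeg e + 2) (X i : S) = MvPolynomial.X i := by
    apply MvPolynomial.ext
    intro m
    classical
    rw [coeff_TT, MvPowerSeries.coeff_X, MvPolynomial.coeff_X']
    by_cases h : m = Finsupp.single i 1
    · subst h
      simp [mdeg_single]
    · simp [h, Ne.symm h]
  rw [this, MvPolynomial.aeval_X]

lemma subst_mul (hσ : ∀ i, constantCoeff (σ i) = 0) (f g : S) :
    subst σ (f * g) = subst σ f * subst σ g := by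
  classical
  apply MvPowerSeries.ext
  intro e
  set N := mdeg e + 1 with hNdef
  have he : mdeg e < N := by omega
  -- RHS
  have hRHS : coeff e (subst σ f * subst σ g) =
      coeff e ((MvPolynomial.aeval σ (TT N f)) * (MvPolynomial.aeval σ (TT N g))) := by
    rw [coeff_mul, coeff_mul]
    apply Finset.sum_congr rfl
    rintro ⟨u, v⟩ huv
    have huv' : u + v = e := Finset.HasAntidiagonal.mem_antidiagonal.mp huv
    have hu : mdeg u < N := by have := mdeg_add u v; rw [huv'] at this; omega
    have hv : mdeg v < N := by have := mdeg_add u v; rw [huv'] at this; omega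
    rw [coeff_subst σ hσ f u hu, coeff_subst σ hσ g v hv]
  rw [hRHS, ← map_mul, coeff_subst σ hσ _ e he]
  -- now compare TT N (f*g) with TT N f * TT N g
  have hsplit : TT N f * TT N g = TT N (f * g) + (TT N f * TT N g - TT N (f * g)) := by ring
  have hz : coeff e (MvPolynomial.aeval σ (TT N f * TT N g - TT N (f * g))) = 0 := by
    refine coeff_aeval_zero σ hσ _ N ?_ e he
    intro m hm
    by_contra hlt
    push_neg at hlt
    apply MvPolynomial.mem_support_iff.mp hm
    rw [MvPolynomial.coeff_sub, coeff_TT, if_pos hlt, MvPolynomial.coeff_mul,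
      MvPowerSeries.coeff_mul, sub_eq_zero]
    apply Finset.sum_congr rfl
    rintro ⟨u, v⟩ huv
    have huv' : u + v = m := Finset.HasAntidiagonal.mem_antidiagonal.mp huv
    have hu : mdeg u < N := by have := mdeg_add u v; rw [huv'] at this; omega
    have hv : mdeg v < N := by have := mdeg_add u v; rw [huv'] at this; omega
    rw [coeff_TT, coeff_TT, if_pos hu, if_pos hv]
  conv_rhs => rw [hsplit]
  rw [map_add, map_add, hz, add_zero]

/-- substitution as a ring homomorphism -/
def substHom (hσ : ∀ i, constantCoeff (σ i) = 0) : S →+* S where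
  toFun := subst σ
  map_one' := subst_one σ
  map_mul' := subst_mul σ hσ
  map_zero' := by
    have h0 := subst_add σ 0 0
    rw [add_zero] at h0
    exact left_eq_add.mp h0
  map_add' := subst_add σ

@[simp] lemma substHom_apply (hσ : ∀ i, constantCoeff (σ i) = 0) (f : S) :
    substHom σ hσ f = subst σ f := rfl

/-- substitution as an algebra homomorphism -/
def substAlg (hσ : ∀ i, constantCoeff (σ i) = 0) : S →ₐ[ℂ] S :=
  { substHom σ hσ with
    commutes' := fun c => by simp [algebraMap_eq_C, subst_C] }

@[simp] lemma substAlg_apply (hσ : ∀ i, constantCoeff (σ i) = 0) (f : S) :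
    substAlg σ hσ f = subst σ f := rfl

lemma subst_aeval (τ : Fin 3 → S) (hτ : ∀ i, constantCoeff (τ i) = 0)
    (P : MvPolynomial (Fin 3) ℂ) :
    subst τ (MvPolynomial.aeval σ P) = MvPolynomial.aeval (fun i => subst τ (σ i)) P := by
  have := DFunLike.congr_fun (MvPolynomial.comp_aeval σ (substAlg τ hτ)) P
  simpa using this

lemma aeval_X_coe (P : MvPolynomial (Fin 3) ℂ) :
    MvPolynomial.aeval (fun i => (X i : S)) P = (P : S) := by
  have : (MvPolynomial.aeval (fun i => (X i : S))) =
      (MvPolynomial.coeToMvPowerSeries.algHom ℂ : MvPolynomial (Fin 3) ℂ →ₐ[ℂ] S) := by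
    apply MvPolynomial.algHom_ext
    intro i
    simp [MvPolynomial.coeToMvPowerSeries.algHom_apply]
  rw [this, MvPolynomial.coeToMvPowerSeries.algHom_apply]
  simp [MvPowerSeries.map_id]

lemma subst_subst (τ : Fin 3 → S) (hσ : ∀ i, constantCoeff (σ i) = 0)
    (hτ : ∀ i, constantCoeff (τ i) = 0)
    (hinv : ∀ i, subst τ (σ i) = X i) (f : S) :
    subst τ (subst σ f) = f := by
  apply MvPowerSeries.ext
  intro e
  set N := mdeg e + 1 with hN
  set E : S := subst σ f - MvPolynomial.aeval σ (TT N f) with hE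
  have hEcoeff : ∀ m : Fin 3 →₀ ℕ, mdeg m < N → coeff m E = 0 := by
    intro m hm
    rw [hE, map_sub, coeff_subst σ hσ f m hm, sub_self]
  have hsplit : subst σ f = MvPolynomial.aeval σ (TT N f) + E := by rw [hE]; ring
  have h1 : subst τ (subst σ f) =
      subst τ (MvPolynomial.aeval σ (TT N f)) + subst τ E := by
    rw [hsplit, subst_add]
  have h2 : coeff e (subst τ E) = 0 := by
    rw [coeff_subst τ hτ E e (show mdeg e < N by omega)]
    have : TT N E = 0 := by
      apply MvPolynomial.ext
      intro m
      rw [coeff_TT]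
      by_cases h : mdeg m < N
      · simp [h, hEcoeff m h]
      · simp [h]
    rw [this, map_zero, map_zero]
  have h3 : subst τ (MvPolynomial.aeval σ (TT N f)) = (TT N f : S) := by
    rw [subst_aeval σ τ hτ]
    have : (fun i => subst τ (σ i)) = fun i => (X i : S) := funext hinv
    rw [this, aeval_X_coe]
  rw [h1, map_add, h2, add_zero, h3, MvPolynomial.coeff_coe, coeff_TT,
    if_pos (show mdeg e < N by omega)]

/-- substitution equivalence -/
def substEquiv (τ : Fin 3 → S) (hσ : ∀ i, constantCoeff (σ i) = 0)
    (hτ : ∀ i, constantCoeff (τ i) = 0)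
    (h1 : ∀ i, subst τ (σ i) = X i) (h2 : ∀ i, subst σ (τ i) = X i) : S ≃+* S where
  toFun := subst σ
  invFun := subst τ
  left_inv := subst_subst σ τ hσ hτ h1
  right_inv := subst_subst τ σ hτ hσ h2
  map_mul' := subst_mul σ hσ
  map_add' := subst_add σ

@[simp] lemma substEquiv_apply (τ : Fin 3 → S) (hσ) (hτ) (h1) (h2) (f : S) :
    substEquiv σ τ hσ hτ h1 h2 f = subst σ f := rfl

lemma substHom_X (hσ : ∀ i, constantCoeff (σ i) = 0) (i : Fin 3) :
    substHom σ hσ (X i) = σ i := subst_X σ hσ i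

lemma substHom_C (hσ : ∀ i, constantCoeff (σ i) = 0) (z : ℂ) :
    substHom σ hσ (C z) = C z := subst_C σ z

/-- decomposition of the pinwheel product -/
lemma prod_decomp {ι : Type} (s : Finset ι) (hs : s.Nonempty) (c : ι → ℂ) :
    ∃ h : S, (∏ j ∈ s, (X 0 + C (c j) * X 1)) =
        X 0 ^ s.card + C (∏ j ∈ s, c j) * X 1 ^ s.card + X 0 * X 1 * h ∧
      ∀ φ : S →+* S, φ (X 0) = X 0 → φ (X 1) = X 1 →
        (∀ z : ℂ, φ (C z) = C z) → φ h = h := by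
  induction hs using Finset.Nonempty.cons_induction with
  | singleton a => exact ⟨0, by simp, fun φ _ _ _ => map_zero φ⟩
  | cons a s ha hs IH =>
    obtain ⟨h, heq, hφ⟩ := IH
    obtain ⟨k, hk⟩ : ∃ k, s.card = k + 1 := ⟨s.card - 1, by have := hs.card_pos; omega⟩
    refine ⟨C (∏ j ∈ s, c j) * X 1 ^ k + C (c a) * X 0 ^ k
      + X 0 * h + C (c a) * X 1 * h, ?_, ?_⟩
    · rw [Finset.prod_cons, heq, Finset.prod_cons, Finset.card_cons, hk, map_mul]
      ring
    · intro φ h0 h1 hC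
      simp only [map_add, map_mul, map_pow, h0, h1, hC, hφ φ h0 h1 hC]

end Stmt11Aux
end


set_option maxHeartbeats 1000000
open Stmt11Aux

/-- For `r ≥ 2` and `A, B, a₁, …, a_r ∈ ℂ` with `B ∏_j (A + a_j) ≠ 0`, setting
`f = xz − A yz + B ∏_j (x + a_j y)` in `R = ℂ⟦x,y,z⟧`, there is a ring isomorphism
`R/(f) ≅ R/(xz + y^r)` (the `A_{r−1}` singularity). -/
theorem stmt_11 (r : ℕ) (hr : 2 ≤ r) (A B : ℂ) (a : Fin r → ℂ)
    (hABa : B * ∏ j : Fin r, (A + a j) ≠ 0) :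
    Nonempty
      ((MvPowerSeries (Fin 3) ℂ ⧸
          Ideal.span {(X 0 : MvPowerSeries (Fin 3) ℂ) * X 2 -
            (C : ℂ →+* MvPowerSeries (Fin 3) ℂ) A * X 1 * X 2 +
            (C : ℂ →+* MvPowerSeries (Fin 3) ℂ) B * ∏ j : Fin r, (X 0 + (C : ℂ →+* MvPowerSeries (Fin 3) ℂ) (a j) * X 1)}) ≃+*
        (MvPowerSeries (Fin 3) ℂ ⧸
          Ideal.span {(X 0 : MvPowerSeries (Fin 3) ℂ) * X 2 + X 1 ^ r})) := by
    classical
  haveI : Nonempty (Fin r) := ⟨⟨0, by omega⟩⟩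
  set c : Fin r → ℂ := fun j => A + a j with hc
  set P : ℂ := ∏ j, c j with hP
  have hw : B * P ≠ 0 := hABa
  obtain ⟨lam, hlam⟩ := IsAlgClosed.exists_pow_nat_eq ((B * P)⁻¹) (show 0 < r by omega)
  have hlam0 : lam ≠ 0 := by
    intro h0
    have : (B * P)⁻¹ = 0 := by rw [← hlam, h0, zero_pow (show r ≠ 0 by omega)]
    exact hw (inv_eq_zero.mp this)
  obtain ⟨h, hprod, hφinv⟩ := prod_decomp Finset.univ Finset.univ_nonempty c
  rw [Finset.card_univ, Fintype.card_fin] at hprod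
  set q : S := C B * X 0 ^ (r - 1) + C B * X 1 * h with hq
  set σ1 : Fin 3 → S := ![X 0 + C A * X 1, X 1, X 2] with hσ1
  set τ1 : Fin 3 → S := ![X 0 - C A * X 1, X 1, X 2] with hτ1
  set σ2 : Fin 3 → S := ![X 0, X 1, X 2 - q] with hσ2
  set τ2 : Fin 3 → S := ![X 0, X 1, X 2 + q] with hτ2
  set σ3 : Fin 3 → S := ![X 0, C lam * X 1, X 2] with hσ3
  set τ3 : Fin 3 → S := ![X 0, C lam⁻¹ * X 1, X 2] with hτ3
  -- component lemmas
  have s10 : σ1 0 = X 0 + C A * X 1 := by rw [hσ1]; rfl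
  have s11 : σ1 1 = X 1 := by rw [hσ1]; rfl
  have s12 : σ1 2 = X 2 := by rw [hσ1]; rfl
  have t10 : τ1 0 = X 0 - C A * X 1 := by rw [hτ1]; rfl
  have t11 : τ1 1 = X 1 := by rw [hτ1]; rfl
  have t12 : τ1 2 = X 2 := by rw [hτ1]; rfl
  have s20 : σ2 0 = X 0 := by rw [hσ2]; rfl
  have s21 : σ2 1 = X 1 := by rw [hσ2]; rfl
  have s22 : σ2 2 = X 2 - q := by rw [hσ2]; rfl
  have t20 : τ2 0 = X 0 := by rw [hτ2]; rfl
  have t21 : τ2 1 = X 1 := by rw [hτ2]; rfl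
  have t22 : τ2 2 = X 2 + q := by rw [hτ2]; rfl
  have s30 : σ3 0 = X 0 := by rw [hσ3]; rfl
  have s31 : σ3 1 = C lam * X 1 := by rw [hσ3]; rfl
  have s32 : σ3 2 = X 2 := by rw [hσ3]; rfl
  have t30 : τ3 0 = X 0 := by rw [hτ3]; rfl
  have t31 : τ3 1 = C lam⁻¹ * X 1 := by rw [hτ3]; rfl
  have t32 : τ3 2 = X 2 := by rw [hτ3]; rfl
  -- constant coefficients
  have hq0 : constantCoeff q = 0 := by
    rw [hq]
    simp [map_add, map_mul, map_pow, constantCoeff_X, zero_pow (show r - 1 ≠ 0 by omega)]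
  have hσ1c : ∀ i, constantCoeff (σ1 i) = 0 := by
    intro i; fin_cases i <;>
      simp [s10, s11, s12, map_add, map_mul, constantCoeff_X]
  have hτ1c : ∀ i, constantCoeff (τ1 i) = 0 := by
    intro i; fin_cases i <;>
      simp [t10, t11, t12, map_sub, map_mul, constantCoeff_X]
  have hσ2c : ∀ i, constantCoeff (σ2 i) = 0 := by
    intro i; fin_cases i <;>
      simp [s20, s21, s22, map_sub, hq0, constantCoeff_X]
  have hτ2c : ∀ i, constantCoeff (τ2 i) = 0 := by
    intro i; fin_cases i <;>
      simp [t20, t21, t22, map_add, hq0, constantCoeff_X]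
  have hσ3c : ∀ i, constantCoeff (σ3 i) = 0 := by
    intro i; fin_cases i <;>
      simp [s30, s31, s32, map_mul, constantCoeff_X]
  have hτ3c : ∀ i, constantCoeff (τ3 i) = 0 := by
    intro i; fin_cases i <;>
      simp [t30, t31, t32, map_mul, constantCoeff_X]
  -- invariance of h under the triangular substitutions
  have hfix2 : substHom σ2 hσ2c h = h :=
    hφinv _ (by rw [substHom_X, s20]) (by rw [substHom_X, s21]) (fun z => substHom_C _ _ z)
  have hfix2' : substHom τ2 hτ2c h = h :=
    hφinv _ (by rw [substHom_X, t20]) (by rw [substHom_X, t21]) (fun z => substHom_C _ _ z)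
  -- inverse conditions
  have h1a : ∀ i, Stmt11Aux.subst τ1 (σ1 i) = X i := by
    intro i
    fin_cases i
    · show substHom τ1 hτ1c (σ1 0) = X 0
      rw [s10, map_add, map_mul, substHom_C, substHom_X, substHom_X, t10, t11]
      ring
    · show substHom τ1 hτ1c (σ1 1) = X 1
      rw [s11, substHom_X, t11]
    · show substHom τ1 hτ1c (σ1 2) = X 2
      rw [s12, substHom_X, t12]
  have h1b : ∀ i, Stmt11Aux.subst σ1 (τ1 i) = X i := by
    intro i
    fin_cases i
    · show substHom σ1 hσ1c (τ1 0) = X 0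
      rw [t10, map_sub, map_mul, substHom_C, substHom_X, substHom_X, s10, s11]
      ring
    · show substHom σ1 hσ1c (τ1 1) = X 1
      rw [t11, substHom_X, s11]
    · show substHom σ1 hσ1c (τ1 2) = X 2
      rw [t12, substHom_X, s12]
  have hqsub2 : substHom τ2 hτ2c q = q := by
    rw [hq, map_add, map_mul, map_mul, map_mul, map_pow, substHom_C, substHom_X,
      substHom_X, hfix2', t20, t21]
  have hqsub2' : substHom σ2 hσ2c q = q := by
    rw [hq, map_add, map_mul, map_mul, map_mul, map_pow, substHom_C, substHom_X,
      substHom_X, hfix2, s20, s21]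
  have h2a : ∀ i, Stmt11Aux.subst τ2 (σ2 i) = X i := by
    intro i
    fin_cases i
    · show substHom τ2 hτ2c (σ2 0) = X 0
      rw [s20, substHom_X, t20]
    · show substHom τ2 hτ2c (σ2 1) = X 1
      rw [s21, substHom_X, t21]
    · show substHom τ2 hτ2c (σ2 2) = X 2
      rw [s22, map_sub, substHom_X, hqsub2, t22]
      ring
  have h2b : ∀ i, Stmt11Aux.subst σ2 (τ2 i) = X i := by
    intro i
    fin_cases i
    · show substHom σ2 hσ2c (τ2 0) = X 0
      rw [t20, substHom_X, s20]
    · show substHom σ2 hσ2c (τ2 1) = X 1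
      rw [t21, substHom_X, s21]
    · show substHom σ2 hσ2c (τ2 2) = X 2
      rw [t22, map_add, substHom_X, hqsub2', s22]
      ring
  have h3a : ∀ i, Stmt11Aux.subst τ3 (σ3 i) = X i := by
    intro i
    fin_cases i
    · show substHom τ3 hτ3c (σ3 0) = X 0
      rw [s30, substHom_X, t30]
    · show substHom τ3 hτ3c (σ3 1) = X 1
      rw [s31, map_mul, substHom_C, substHom_X, t31, ← mul_assoc, ← map_mul,
        mul_inv_cancel₀ hlam0, map_one, one_mul]
    · show substHom τ3 hτ3c (σ3 2) = X 2
      rw [s32, substHom_X, t32]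
  have h3b : ∀ i, Stmt11Aux.subst σ3 (τ3 i) = X i := by
    intro i
    fin_cases i
    · show substHom σ3 hσ3c (τ3 0) = X 0
      rw [t30, substHom_X, s30]
    · show substHom σ3 hσ3c (τ3 1) = X 1
      rw [t31, map_mul, substHom_C, substHom_X, s31, ← mul_assoc, ← map_mul,
        inv_mul_cancel₀ hlam0, map_one, one_mul]
    · show substHom σ3 hσ3c (τ3 2) = X 2
      rw [t32, substHom_X, s32]
  -- the equivalence
  set E : S ≃+* S :=
    ((substEquiv σ1 τ1 hσ1c hτ1c h1a h1b).trans
      (substEquiv σ2 τ2 hσ2c hτ2c h2a h2b)).trans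
      (substEquiv σ3 τ3 hσ3c hτ3c h3a h3b) with hE
  -- the three steps of the computation
  have step1 : substHom σ1 hσ1c
      ((X 0 : S) * X 2 - C A * X 1 * X 2 +
        C B * ∏ j : Fin r, (X 0 + C (a j) * X 1)) =
      X 0 * X 2 + C B *
        (X 0 ^ r + C P * X 1 ^ r + X 0 * X 1 * h) := by
    rw [map_add, map_sub, map_mul, map_mul, map_mul, map_mul, substHom_C, substHom_C,
      substHom_X, substHom_X, substHom_X, map_prod]
    have hconv : ∀ j : Fin r, substHom σ1 hσ1c (X 0 + C (a j) * X 1) =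
        X 0 + C (c j) * X 1 := by
      intro j
      rw [map_add, map_mul, substHom_C, substHom_X, substHom_X, s10, s11, hc]
      simp only [map_add]
      ring
    rw [Finset.prod_congr rfl (fun j _ => hconv j), hprod, s10, s11, s12, ← hP]
    ring
  have step2 : substHom σ2 hσ2c
      ((X 0 : S) * X 2 + C B *
        (X 0 ^ r + C P * X 1 ^ r + X 0 * X 1 * h)) =
      X 0 * X 2 + C (B * P) * X 1 ^ r := by
    rw [map_add, map_mul, map_mul, map_add, map_add, map_pow, map_mul, map_mul,
      map_pow, map_mul, substHom_C, substHom_C, substHom_X, substHom_X, substHom_X,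
      hfix2, s20, s21, s22, hq, map_mul (C : ℂ →+* S)]
    obtain ⟨k, hk⟩ : ∃ k, r = k + 1 := ⟨r - 1, by omega⟩
    rw [hk, Nat.add_sub_cancel]
    ring
  have step3 : substHom σ3 hσ3c
      ((X 0 : S) * X 2 + C (B * P) * X 1 ^ r) =
      X 0 * X 2 + X 1 ^ r := by
    rw [map_add, map_mul, map_mul, map_pow, substHom_C, substHom_X, substHom_X,
      substHom_X, s30, s31, s32, mul_pow, ← map_pow, hlam, ← mul_assoc, ← map_mul,
      mul_inv_cancel₀ hw, map_one, one_mul]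
  have hEf : E ((X 0 : S) * X 2 - C A * X 1 * X 2 +
      C B * ∏ j : Fin r, (X 0 + C (a j) * X 1)) =
      X 0 * X 2 + X 1 ^ r := by
    rw [hE]
    show substHom σ3 hσ3c (substHom σ2 hσ2c (substHom σ1 hσ1c _)) = _
    rw [step1, step2, step3]
  refine ⟨Ideal.quotientEquiv _ _ E ?_⟩
  rw [Ideal.map_span, Set.image_singleton]
  have hEf2 : (E : MvPowerSeries (Fin 3) ℂ →+* MvPowerSeries (Fin 3) ℂ)
      ((X 0 : S) * X 2 - C A * X 1 * X 2 +
        C B * ∏ j : Fin r, (X 0 + C (a j) * X 1)) =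
      X 0 * X 2 + X 1 ^ r := hEf
  rw [hEf2]
end
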